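/- arXiv:2304.02975 — 3 statements merged into one kernel-verified Lean document; each statement's English description precedes it below -/
import Mathlib

section
/- Consider a single LSTM layer with n_c units and input dimension n_u: given state (c,h) ∈ ℝ^{n_c}×ℝ^{n_c} and input u ∈ ℝ^{n_u}, the updated state is c⁺ = f∘c + i∘r and h⁺ = z∘φ(c⁺), where f = σ(W_f u + U_f h + b_f), i = σ(W_i u + U_i h + b_i), z = σ(W_z u + U_z h + b_z), r = φ(W_r u + U_r h + b_r). Define σ̄_f = σ(M_f), σ̄_i = σ(M_i), φ̄_r = tanh(M_r), where M_* is the maximum over rows of the ℓ¹ norm of the concatenated row of [W_* U_* b_*], and set c̄ = σ̄_i φ̄_r/(1−σ̄_f) and h̄ = tanh(c̄). Then for every input u with ‖u‖∞ ≤ 1 and every state with ‖c‖∞ ≤ c̄ and ‖h‖∞ ≤ h̄, the updated state satisfies ‖c⁺‖∞ ≤ c̄ and ‖h⁺‖∞ ≤ h̄. -/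
lemma tanh_eq' (x : ℝ) : Real.tanh x = 1 - 2 / (Real.exp (2*x) + 1) := by
  rw [Real.tanh_eq_sinh_div_cosh, Real.sinh_eq, Real.cosh_eq, two_mul, Real.exp_add]
  have h1 : Real.exp x ≠ 0 := (Real.exp_pos x).ne'
  have h2 : Real.exp x * Real.exp (-x) = 1 := by
    rw [← Real.exp_add]; simp
  have h3 : Real.exp x + Real.exp (-x) ≠ 0 := by positivity
  have h4 : Real.exp x * Real.exp x + 1 ≠ 0 := by positivity
  field_simp
  linear_combination (-2*Real.exp x) * h2

lemma tanh_mono : Monotone Real.tanh := by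
  intro a b hab
  rw [tanh_eq', tanh_eq']
  have h : Real.exp (2*a) ≤ Real.exp (2*b) := Real.exp_le_exp.mpr (by linarith)
  have hd : 2 / (Real.exp (2*b) + 1) ≤ 2 / (Real.exp (2*a) + 1) :=
    div_le_div_of_nonneg_left (by norm_num) (by positivity) (by linarith)
  linarith

lemma tanh_lt_one (x : ℝ) : Real.tanh x < 1 := by
  rw [tanh_eq']
  have : 0 < 2 / (Real.exp (2*x) + 1) := by positivity
  linarith

lemma tanh_nonneg' {x : ℝ} (hx : 0 ≤ x) : 0 ≤ Real.tanh x := by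
  rw [tanh_eq']
  have h1 : (1:ℝ) ≤ Real.exp (2*x) := Real.one_le_exp (by linarith)
  have h2 : 2 / (Real.exp (2*x) + 1) ≤ 1 := by
    rw [div_le_one (by positivity)]; linarith
  linarith

lemma abs_tanh_le (x : ℝ) : |Real.tanh x| ≤ Real.tanh |x| := by
  rcases le_or_gt 0 x with hx | hx
  · rw [abs_of_nonneg hx, abs_of_nonneg (tanh_nonneg' hx)]
  · have hneg : Real.tanh x ≤ 0 := by
      have := tanh_mono hx.le
      simpa using this
    rw [abs_of_neg hx, abs_of_nonpos hneg, ← Real.tanh_neg]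

/-- The sigmoid activation function `σ(x) = 1/(1+e^{-x})`. -/
noncomputable def sigm (x : ℝ) : ℝ := 1 / (1 + Real.exp (-x))

lemma sigm_pos (x : ℝ) : 0 < sigm x := by unfold sigm; positivity

lemma sigm_lt_one (x : ℝ) : sigm x < 1 := by
  unfold sigm
  rw [div_lt_one (by positivity)]
  linarith [Real.exp_pos (-x)]

lemma sigm_mono : Monotone sigm := by
  intro a b hab
  unfold sigm
  apply div_le_div_of_nonneg_left (by norm_num) (by positivity)
  have := Real.exp_le_exp.mpr (neg_le_neg hab)
  linarith

/-- The maximum over rows of the ℓ¹ norm of the rows of the augmented matrix `[W U b]`. -/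
noncomputable def augRowMax {n m p : ℕ} (W : Matrix (Fin n) (Fin m) ℝ)
    (U : Matrix (Fin n) (Fin p) ℝ) (b : Fin n → ℝ) : ℝ :=
  ⨆ j, (∑ i, |W j i| + ∑ i, |U j i| + |b j|)

lemma augRowMax_nonneg {n m p : ℕ} (W : Matrix (Fin n) (Fin m) ℝ)
    (U : Matrix (Fin n) (Fin p) ℝ) (b : Fin n → ℝ) : 0 ≤ augRowMax W U b := by
  apply Real.iSup_nonneg
  intro j
  positivity

lemma rowBound {n m p : ℕ} (W : Matrix (Fin n) (Fin m) ℝ)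
    (U : Matrix (Fin n) (Fin p) ℝ) (b : Fin n → ℝ)
    (u : Fin m → ℝ) (h : Fin p → ℝ)
    (hu : ∀ k, |u k| ≤ 1) (hh : ∀ k, |h k| ≤ 1) (j : Fin n) :
    |(W.mulVec u + U.mulVec h + b) j| ≤ augRowMax W U b := by
  have hW : |(W.mulVec u) j| ≤ ∑ i, |W j i| := by
    rw [Matrix.mulVec, dotProduct]
    calc |∑ i, W j i * u i| ≤ ∑ i, |W j i * u i| := Finset.abs_sum_le_sum_abs _ _
      _ ≤ ∑ i, |W j i| := Finset.sum_le_sum fun i _ => by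
          rw [abs_mul]; exact mul_le_of_le_one_right (abs_nonneg _) (hu i)
  have hU : |(U.mulVec h) j| ≤ ∑ i, |U j i| := by
    rw [Matrix.mulVec, dotProduct]
    calc |∑ i, U j i * h i| ≤ ∑ i, |U j i * h i| := Finset.abs_sum_le_sum_abs _ _
      _ ≤ ∑ i, |U j i| := Finset.sum_le_sum fun i _ => by
          rw [abs_mul]; exact mul_le_of_le_one_right (abs_nonneg _) (hh i)
  have hsum : |(W.mulVec u + U.mulVec h + b) j| ≤ ∑ i, |W j i| + ∑ i, |U j i| + |b j| := by
    simp only [Pi.add_apply]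
    calc |(W.mulVec u) j + (U.mulVec h) j + b j|
        ≤ |(W.mulVec u) j + (U.mulVec h) j| + |b j| := abs_add_le _ _
      _ ≤ (|(W.mulVec u) j| + |(U.mulVec h) j|) + |b j| := by
          linarith [abs_add_le ((W.mulVec u) j) ((U.mulVec h) j)]
      _ ≤ ∑ i, |W j i| + ∑ i, |U j i| + |b j| := by linarith
  rw [augRowMax]
  exact hsum.trans (le_ciSup (f := fun j => ∑ i, |W j i| + ∑ i, |U j i| + |b j|)
    (Set.Finite.bddAbove (Set.finite_range _)) j)

/-- Invariant set of a single LSTM layer: if `‖u‖∞ ≤ 1`, `‖c‖∞ ≤ c̄` and `‖h‖∞ ≤ h̄`,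
with `c̄ = σ̄_i φ̄_r / (1 - σ̄_f)` and `h̄ = tanh c̄`, then the updated state
`c⁺ = f∘c + i∘r`, `h⁺ = z∘tanh(c⁺)` satisfies `‖c⁺‖∞ ≤ c̄` and `‖h⁺‖∞ ≤ h̄`. -/
theorem stmt_4 {nc nu : ℕ}
    (Wf Wi Wz Wr : Matrix (Fin nc) (Fin nu) ℝ)
    (Uf Ui Uz Ur : Matrix (Fin nc) (Fin nc) ℝ)
    (bf bi bz br : Fin nc → ℝ)
    (σf σi φr cbar hbar : ℝ)
    (hσf : σf = sigm (augRowMax Wf Uf bf))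
    (hσi : σi = sigm (augRowMax Wi Ui bi))
    (hφr : φr = Real.tanh (augRowMax Wr Ur br))
    (hcbar : cbar = σi * φr / (1 - σf))
    (hhbar : hbar = Real.tanh cbar)
    (u : Fin nu → ℝ) (hu : ‖u‖ ≤ 1)
    (c h : Fin nc → ℝ) (hc : ‖c‖ ≤ cbar) (hh : ‖h‖ ≤ hbar)
    (f i z r cplus hplus : Fin nc → ℝ)
    (hf : f = fun j => sigm ((Wf.mulVec u + Uf.mulVec h + bf) j))
    (hi : i = fun j => sigm ((Wi.mulVec u + Ui.mulVec h + bi) j))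
    (hz : z = fun j => sigm ((Wz.mulVec u + Uz.mulVec h + bz) j))
    (hr : r = fun j => Real.tanh ((Wr.mulVec u + Ur.mulVec h + br) j))
    (hcplus : cplus = fun j => f j * c j + i j * r j)
    (hhplus : hplus = fun j => z j * Real.tanh (cplus j)) :
    ‖cplus‖ ≤ cbar ∧ ‖hplus‖ ≤ hbar := by
  -- basic facts about the constants
  have hσf_pos : 0 < σf := hσf ▸ sigm_pos _
  have hσf_lt : σf < 1 := hσf ▸ sigm_lt_one _
  have hσi_pos : 0 < σi := hσi ▸ sigm_pos _
  have hφr_nonneg : 0 ≤ φr := hφr ▸ tanh_nonneg' (augRowMax_nonneg _ _ _)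
  have hcbar_nonneg : 0 ≤ cbar := by
    rw [hcbar]
    exact div_nonneg (mul_nonneg hσi_pos.le hφr_nonneg) (by linarith)
  have hhbar_nonneg : 0 ≤ hbar := hhbar ▸ tanh_nonneg' hcbar_nonneg
  have hhbar_le_one : hbar ≤ 1 := hhbar ▸ (tanh_lt_one cbar).le
  have hkey : σi * φr = (1 - σf) * cbar := by
    have hne : (1 - σf) ≠ 0 := by linarith
    rw [hcbar]; field_simp
  -- componentwise bounds on inputs
  have hu' : ∀ k, |u k| ≤ 1 := fun k => le_trans (by
    simpa [Real.norm_eq_abs] using norm_le_pi_norm u k) hu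
  have hc' : ∀ k, |c k| ≤ cbar := fun k => le_trans (by
    simpa [Real.norm_eq_abs] using norm_le_pi_norm c k) hc
  have hh' : ∀ k, |h k| ≤ hbar := fun k => le_trans (by
    simpa [Real.norm_eq_abs] using norm_le_pi_norm h k) hh
  have hh1 : ∀ k, |h k| ≤ 1 := fun k => (hh' k).trans hhbar_le_one
  -- gate bounds
  have hfb : ∀ j, |f j| ≤ σf := by
    intro j
    rw [hf, hσf]
    rw [abs_of_pos (sigm_pos _)]
    exact sigm_mono ((le_abs_self _).trans (rowBound Wf Uf bf u h hu' hh1 j))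
  have hib : ∀ j, |i j| ≤ σi := by
    intro j
    rw [hi, hσi]
    rw [abs_of_pos (sigm_pos _)]
    exact sigm_mono ((le_abs_self _).trans (rowBound Wi Ui bi u h hu' hh1 j))
  have hzb : ∀ j, |z j| ≤ 1 := by
    intro j
    rw [hz, abs_of_pos (sigm_pos _)]
    exact (sigm_lt_one _).le
  have hrb : ∀ j, |r j| ≤ φr := by
    intro j
    rw [hr, hφr]
    exact (abs_tanh_le _).trans (tanh_mono (rowBound Wr Ur br u h hu' hh1 j))
  -- bound on cplus components
  have hcpb : ∀ j, |cplus j| ≤ cbar := by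
    intro j
    rw [hcplus]
    have h1 : |f j * c j| ≤ σf * cbar := by
      rw [abs_mul]
      exact mul_le_mul (hfb j) (hc' j) (abs_nonneg _) hσf_pos.le
    have h2 : |i j * r j| ≤ σi * φr := by
      rw [abs_mul]
      exact mul_le_mul (hib j) (hrb j) (abs_nonneg _) hσi_pos.le
    calc |f j * c j + i j * r j| ≤ |f j * c j| + |i j * r j| := abs_add_le _ _
      _ ≤ σf * cbar + σi * φr := by linarith
      _ = cbar := by rw [hkey]; ring
  constructor
  · rw [pi_norm_le_iff_of_nonneg hcbar_nonneg]
    intro j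
    simpa [Real.norm_eq_abs] using hcpb j
  · rw [pi_norm_le_iff_of_nonneg hhbar_nonneg]
    intro j
    rw [hhplus]
    simp only [Real.norm_eq_abs]
    calc |z j * Real.tanh (cplus j)| = |z j| * |Real.tanh (cplus j)| := abs_mul _ _
      _ ≤ 1 * Real.tanh |cplus j| := mul_le_mul (hzb j) (abs_tanh_le _)
          (abs_nonneg _) zero_le_one
      _ = Real.tanh |cplus j| := one_mul _
      _ ≤ Real.tanh cbar := tanh_mono (hcpb j)
      _ = hbar := hhbar.symm
end

section
/- Consider a single LSTM layer with hidden-state update h⁺ = z∘φ(c⁺), where z = σ(W_z u + U_z h + b_z). Define σ̄_z = σ(M_z) with M_z the maximum row ℓ¹ norm of [W_z U_z b_z], and let h̄ = tanh(c̄) for some c̄ ≥ 0. Then for any two triples (c_a⁺, h_a, u_a) and (c_b⁺, h_b, u_b) with ‖c_a⁺‖∞ ≤ c̄, ‖c_b⁺‖∞ ≤ c̄, ‖h_a‖∞ ≤ 1, ‖h_b‖∞ ≤ 1, ‖u_a‖∞ ≤ 1, ‖u_b‖∞ ≤ 1, the updated hidden states h_a⁺ = z_a∘φ(c_a⁺)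 and h_b⁺ = z_b∘φ(c_b⁺) satisfy ‖h_a⁺ − h_b⁺‖₂ ≤ σ̄_z ‖c_a⁺ − c_b⁺‖₂ + (1/4) h̄ ( ‖U_z‖₂ ‖h_a − h_b‖₂ + ‖W_z‖₂ ‖u_a − u_b‖₂ ). -/
/-- The Euclidean norm of a vector in `ℝ^n`. -/
noncomputable def norm2 {n : ℕ} (v : Fin n → ℝ) : ℝ := Real.sqrt (∑ i, (v i) ^ 2)

/-- The spectral (induced 2-) norm of a real matrix. -/
noncomputable def opNorm2 {n m : ℕ} (A : Matrix (Fin n) (Fin m) ℝ) : ℝ :=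
  ‖LinearMap.toContinuousLinearMap (Matrix.toEuclideanLin A)‖

/- ### Auxiliary lemmas about `tanh` and `sigm` -/

lemma myHasDerivAt_tanh (x : ℝ) : HasDerivAt Real.tanh (1 / Real.cosh x ^ 2) x := by
  have h : HasDerivAt (fun y => Real.sinh y / Real.cosh y)
      ((Real.cosh x * Real.cosh x - Real.sinh x * Real.sinh x) / Real.cosh x ^ 2) x :=
    (Real.hasDerivAt_sinh x).div (Real.hasDerivAt_cosh x) (Real.cosh_pos x).ne'
  have e : (Real.cosh x * Real.cosh x - Real.sinh x * Real.sinh x) / Real.cosh x ^ 2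
      = 1 / Real.cosh x ^ 2 := by
    rw [show Real.cosh x * Real.cosh x - Real.sinh x * Real.sinh x
        = Real.cosh x ^ 2 - Real.sinh x ^ 2 by ring, Real.cosh_sq_sub_sinh_sq]
  rw [← e]
  exact h.congr_of_eventuallyEq (Filter.Eventually.of_forall fun y => Real.tanh_eq_sinh_div_cosh y)

lemma tanh_lip (a b : ℝ) : |Real.tanh a - Real.tanh b| ≤ |a - b| := by
  have := Convex.norm_image_sub_le_of_norm_hasDerivWithin_le
    (f := Real.tanh) (f' := fun x => 1 / Real.cosh x ^ 2) (C := 1) (s := Set.univ)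
    (fun x _ => (myHasDerivAt_tanh x).hasDerivWithinAt)
    (fun x _ => by
      rw [Real.norm_eq_abs, abs_of_nonneg (by positivity)]
      rw [div_le_one (by positivity)]
      nlinarith [Real.one_le_cosh x])
    convex_univ (Set.mem_univ b) (Set.mem_univ a)
  simpa [Real.norm_eq_abs] using this

lemma abs_tanh_le_s10 {c cbar : ℝ} (h : |c| ≤ cbar) : |Real.tanh c| ≤ Real.tanh cbar := by
  rw [abs_le] at h ⊢
  constructor
  · have := tanh_mono h.1
    rwa [Real.tanh_neg] at this
  · exact tanh_mono h.2

lemma sigm_hasDerivAt (x : ℝ) :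
    HasDerivAt sigm (Real.exp (-x) / (1 + Real.exp (-x)) ^ 2) x := by
  have h1 : HasDerivAt (fun y : ℝ => 1 + Real.exp (-y)) (-Real.exp (-x)) x := by
    have := (Real.hasDerivAt_exp (-x)).comp x ((hasDerivAt_id x).neg)
    simpa using this.const_add 1
  have h2 := h1.inv (by positivity)
  have e : -(-Real.exp (-x)) / (1 + Real.exp (-x)) ^ 2
      = Real.exp (-x) / (1 + Real.exp (-x)) ^ 2 := by ring
  unfold sigm
  simp only [one_div]
  rw [e] at h2
  exact h2

lemma sigm_lip (a b : ℝ) : |sigm a - sigm b| ≤ (1 / 4) * |a - b| := by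
  have := Convex.norm_image_sub_le_of_norm_hasDerivWithin_le
    (f := sigm) (f' := fun x => Real.exp (-x) / (1 + Real.exp (-x)) ^ 2) (C := 1 / 4)
    (s := Set.univ)
    (fun x _ => (sigm_hasDerivAt x).hasDerivWithinAt)
    (fun x _ => by
      rw [Real.norm_eq_abs, abs_of_nonneg (by positivity),
        div_le_div_iff₀ (by positivity) (by norm_num)]
      nlinarith [sq_nonneg (1 - Real.exp (-x)), Real.exp_pos (-x)])
    convex_univ (Set.mem_univ b) (Set.mem_univ a)
  simpa [Real.norm_eq_abs] using this

lemma sigm_nonneg (x : ℝ) : 0 ≤ sigm x := by unfold sigm; positivity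

/- ### Auxiliary lemmas about `norm2` and `opNorm2` -/

lemma norm2_eq_norm {n : ℕ} (v : Fin n → ℝ) :
    norm2 v = ‖(WithLp.equiv 2 (Fin n → ℝ)).symm v‖ := by
  simp [norm2, EuclideanSpace.norm_eq, Real.norm_eq_abs, sq_abs]

lemma norm2_mono {n : ℕ} {a b : Fin n → ℝ} (h : ∀ j, |a j| ≤ b j) :
    norm2 a ≤ norm2 b := by
  apply Real.sqrt_le_sqrt
  apply Finset.sum_le_sum
  intro j _
  calc a j ^ 2 = |a j| ^ 2 := (sq_abs _).symm
    _ ≤ b j ^ 2 := by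
        have := h j
        nlinarith [abs_nonneg (a j)]

lemma norm2_add_le {n : ℕ} (a b : Fin n → ℝ) :
    norm2 (fun j => a j + b j) ≤ norm2 a + norm2 b := by
  rw [norm2_eq_norm, norm2_eq_norm, norm2_eq_norm]
  exact norm_add_le ((WithLp.equiv 2 (Fin n → ℝ)).symm a) ((WithLp.equiv 2 (Fin n → ℝ)).symm b)

lemma norm2_smul {n : ℕ} (s : ℝ) (v : Fin n → ℝ) :
    norm2 (fun j => s * v j) = |s| * norm2 v := by
  simp only [norm2, mul_pow, ← Finset.mul_sum]
  rw [Real.sqrt_mul (sq_nonneg s), Real.sqrt_sq_eq_abs]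

lemma norm2_abs {n : ℕ} (v : Fin n → ℝ) : norm2 (fun j => |v j|) = norm2 v := by
  simp [norm2, sq_abs]

lemma norm2_mulVec_le {n m : ℕ} (A : Matrix (Fin n) (Fin m) ℝ) (v : Fin m → ℝ) :
    norm2 (A.mulVec v) ≤ opNorm2 A * norm2 v := by
  rw [norm2_eq_norm, norm2_eq_norm]
  have h := (LinearMap.toContinuousLinearMap (Matrix.toEuclideanLin A)).le_opNorm
    ((WithLp.equiv 2 (Fin m → ℝ)).symm v)
  simpa [Matrix.toEuclideanLin_apply_piLp_toLp, opNorm2] using h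

/-- Incremental bound on the LSTM hidden-state update `h⁺ = z∘tanh(c⁺)`:
`‖h_a⁺ − h_b⁺‖₂ ≤ σ̄_z ‖c_a⁺ − c_b⁺‖₂ + (1/4) h̄ (‖U_z‖₂ ‖h_a − h_b‖₂ + ‖W_z‖₂ ‖u_a − u_b‖₂)`. -/
theorem stmt_10 {nc nu : ℕ}
    (Wz : Matrix (Fin nc) (Fin nu) ℝ) (Uz : Matrix (Fin nc) (Fin nc) ℝ) (bz : Fin nc → ℝ)
    (σz cbar hbar : ℝ)
    (hσz : σz = sigm (augRowMax Wz Uz bz))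
    (hcbar : 0 ≤ cbar)
    (hhbar : hbar = Real.tanh cbar)
    (caplus cbplus ha hb : Fin nc → ℝ) (ua ub : Fin nu → ℝ)
    (hcaplus : ‖caplus‖ ≤ cbar) (hcbplus : ‖cbplus‖ ≤ cbar)
    (hha : ‖ha‖ ≤ 1) (hhb : ‖hb‖ ≤ 1)
    (hua : ‖ua‖ ≤ 1) (hub : ‖ub‖ ≤ 1)
    (haplus hbplus : Fin nc → ℝ)
    (hhaplus : haplus = fun j =>
      sigm ((Wz.mulVec ua + Uz.mulVec ha + bz) j) * Real.tanh (caplus j))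
    (hhbplus : hbplus = fun j =>
      sigm ((Wz.mulVec ub + Uz.mulVec hb + bz) j) * Real.tanh (cbplus j)) :
    norm2 (fun j => haplus j - hbplus j) ≤
      σz * norm2 (fun j => caplus j - cbplus j) +
        (1 / 4) * hbar * (opNorm2 Uz * norm2 (fun j => ha j - hb j) +
          opNorm2 Wz * norm2 (fun j => ua j - ub j)) := by
  have hbar_nonneg : 0 ≤ hbar := by
    rw [hhbar]
    have := tanh_mono hcbar
    simpa using this
  have σz_nonneg : 0 ≤ σz := hσz ▸ sigm_nonneg _
  set Δh : Fin nc → ℝ := fun i => ha i - hb i with hΔh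
  set Δu : Fin nu → ℝ := fun i => ua i - ub i with hΔu
  set w : Fin nc → ℝ := fun j => Uz.mulVec Δh j + Wz.mulVec Δu j with hw
  -- pointwise key inequality
  have key : ∀ j, |haplus j - hbplus j| ≤
      σz * |caplus j - cbplus j| + (1 / 4 * hbar) * |w j| := by
    intro j
    set xa : ℝ := (Wz.mulVec ua + Uz.mulVec ha + bz) j with hxa
    set xb : ℝ := (Wz.mulVec ub + Uz.mulVec hb + bz) j with hxb
    have hdiff : haplus j - hbplus j =
        sigm xa * (Real.tanh (caplus j) - Real.tanh (cbplus j))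
          + (sigm xa - sigm xb) * Real.tanh (cbplus j) := by
      rw [hhaplus, hhbplus]; ring
    -- bound `sigm xa ≤ σz`
    have hxa_le : xa ≤ augRowMax Wz Uz bz := by
      have h1 : ∑ i, Wz j i * ua i ≤ ∑ i, |Wz j i| := by
        apply Finset.sum_le_sum
        intro i _
        calc Wz j i * ua i ≤ |Wz j i * ua i| := le_abs_self _
          _ = |Wz j i| * |ua i| := abs_mul _ _
          _ ≤ |Wz j i| * 1 := by
              apply mul_le_mul_of_nonneg_left _ (abs_nonneg _)
              calc |ua i| = ‖ua i‖ := (Real.norm_eq_abs _).symm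
                _ ≤ ‖ua‖ := norm_le_pi_norm ua i
                _ ≤ 1 := hua
          _ = |Wz j i| := mul_one _
      have h2 : ∑ i, Uz j i * ha i ≤ ∑ i, |Uz j i| := by
        apply Finset.sum_le_sum
        intro i _
        calc Uz j i * ha i ≤ |Uz j i * ha i| := le_abs_self _
          _ = |Uz j i| * |ha i| := abs_mul _ _
          _ ≤ |Uz j i| * 1 := by
              apply mul_le_mul_of_nonneg_left _ (abs_nonneg _)
              calc |ha i| = ‖ha i‖ := (Real.norm_eq_abs _).symm
                _ ≤ ‖ha‖ := norm_le_pi_norm ha i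
                _ ≤ 1 := hha
          _ = |Uz j i| := mul_one _
      have h3 : bz j ≤ |bz j| := le_abs_self _
      have hle : xa ≤ ∑ i, |Wz j i| + ∑ i, |Uz j i| + |bz j| := by
        have : xa = ∑ i, Wz j i * ua i + ∑ i, Uz j i * ha i + bz j := by
          simp [hxa, Matrix.mulVec, dotProduct]
        rw [this]
        linarith
      refine hle.trans ?_
      unfold augRowMax
      exact le_ciSup (f := fun j => ∑ i, |Wz j i| + ∑ i, |Uz j i| + |bz j|)
        (Set.Finite.bddAbove (Set.finite_range _)) j
    have hsigm_xa_le : sigm xa ≤ σz := hσz ▸ sigm_mono hxa_le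
    -- bound `xa - xb = w j`
    have hxaxb : xa - xb = w j := by
      simp only [hxa, hxb, hw, hΔh, hΔu, Pi.add_apply, Matrix.mulVec, dotProduct, mul_sub,
        Finset.sum_sub_distrib]
      ring
    -- bound on `|tanh (cbplus j)|`
    have htanh_cb : |Real.tanh (cbplus j)| ≤ hbar := by
      rw [hhbar]
      apply abs_tanh_le_s10
      calc |cbplus j| = ‖cbplus j‖ := (Real.norm_eq_abs _).symm
        _ ≤ ‖cbplus‖ := norm_le_pi_norm cbplus j
        _ ≤ cbar := hcbplus
    calc |haplus j - hbplus j|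
        ≤ |sigm xa * (Real.tanh (caplus j) - Real.tanh (cbplus j))|
          + |(sigm xa - sigm xb) * Real.tanh (cbplus j)| := by
          rw [hdiff]; exact abs_add_le _ _
      _ ≤ σz * |caplus j - cbplus j| + (1 / 4 * hbar) * |w j| := by
          apply add_le_add
          · rw [abs_mul, abs_of_nonneg (sigm_nonneg xa)]
            exact mul_le_mul hsigm_xa_le (tanh_lip _ _) (abs_nonneg _) σz_nonneg
          · rw [abs_mul]
            calc |sigm xa - sigm xb| * |Real.tanh (cbplus j)|
                ≤ (1 / 4 * |xa - xb|) * hbar := by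
                  apply mul_le_mul (sigm_lip xa xb) htanh_cb (abs_nonneg _)
                  positivity
              _ = (1 / 4 * hbar) * |w j| := by rw [hxaxb]; ring
  -- assemble via norm2
  have step1 : norm2 (fun j => haplus j - hbplus j) ≤
      norm2 (fun j => σz * |caplus j - cbplus j| + (1 / 4 * hbar) * |w j|) :=
    norm2_mono key
  have step2 : norm2 (fun j => σz * |caplus j - cbplus j| + (1 / 4 * hbar) * |w j|) ≤
      σz * norm2 (fun j => caplus j - cbplus j) + (1 / 4 * hbar) * norm2 w := by
    calc norm2 (fun j => σz * |caplus j - cbplus j| + (1 / 4 * hbar) * |w j|)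
        ≤ norm2 (fun j => σz * |caplus j - cbplus j|)
          + norm2 (fun j => (1 / 4 * hbar) * |w j|) := norm2_add_le _ _
      _ = σz * norm2 (fun j => caplus j - cbplus j) + (1 / 4 * hbar) * norm2 w := by
          rw [norm2_smul, norm2_smul, norm2_abs, norm2_abs,
            abs_of_nonneg σz_nonneg, abs_of_nonneg (by positivity : (0:ℝ) ≤ 1 / 4 * hbar)]
  have stepw : norm2 w ≤ opNorm2 Uz * norm2 Δh + opNorm2 Wz * norm2 Δu := by
    calc norm2 w ≤ norm2 (Uz.mulVec Δh) + norm2 (Wz.mulVec Δu) :=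
          norm2_add_le (Uz.mulVec Δh) (Wz.mulVec Δu)
      _ ≤ opNorm2 Uz * norm2 Δh + opNorm2 Wz * norm2 Δu :=
          add_le_add (norm2_mulVec_le Uz Δh) (norm2_mulVec_le Wz Δu)
  have final : (1 / 4 * hbar) * norm2 w ≤
      (1 / 4) * hbar * (opNorm2 Uz * norm2 Δh + opNorm2 Wz * norm2 Δu) := by
    rw [show (1 / 4 : ℝ) * hbar * (opNorm2 Uz * norm2 Δh + opNorm2 Wz * norm2 Δu)
        = (1 / 4 * hbar) * (opNorm2 Uz * norm2 Δh + opNorm2 Wz * norm2 Δu) by ring]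
    exact mul_le_mul_of_nonneg_left stepw (by positivity)
  calc norm2 (fun j => haplus j - hbplus j)
      ≤ σz * norm2 (fun j => caplus j - cbplus j) + (1 / 4 * hbar) * norm2 w :=
        step1.trans step2
    _ ≤ σz * norm2 (fun j => caplus j - cbplus j) +
        (1 / 4) * hbar * (opNorm2 Uz * norm2 (fun j => ha j - hb j) +
          opNorm2 Wz * norm2 (fun j => ua j - ub j)) := by
        exact add_le_add_right final _
end

section
/- Let a, z ∈ (0,1) and α, q ≥ 0 be real numbers, and let M be the real 2×2 matrix with rows (a, α) and (z·a, z·α + q). If a + z·α + q − a·q < 1 and a·q < 1, then every complex eigenvalue of M has modulus strictly less than 1 (M is Schur stable). -/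
/-- Key quadratic lemma: if `μ² - tμ + d = 0` with `0 ≤ t`, `0 ≤ d < 1`, `t < 1 + d`,
then `|μ| < 1`. -/
lemma quad_root_abs_lt_one (t d : ℝ) (ht : 0 ≤ t) (hd0 : 0 ≤ d) (hd1 : d < 1)
    (htd : t < 1 + d) (μ : ℂ) (heq : μ ^ 2 - (t : ℂ) * μ + (d : ℂ) = 0) :
    ‖μ‖ < 1 := by
  set x := μ.re with hx
  set y := μ.im with hy
  have hre : x ^ 2 - y ^ 2 - t * x + d = 0 := by
    have := congrArg Complex.re heq
    simp [Complex.add_re, Complex.sub_re, Complex.mul_re, pow_two, Complex.ofReal_re,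
      Complex.ofReal_im, ← hx, ← hy] at this
    nlinarith [this]
  have him : y * (2 * x - t) = 0 := by
    have := congrArg Complex.im heq
    simp [Complex.add_im, Complex.sub_im, Complex.mul_im, pow_two, Complex.ofReal_re,
      Complex.ofReal_im, ← hx, ← hy] at this
    nlinarith [this]
  have habs : ‖μ‖ ^ 2 = x ^ 2 + y ^ 2 := by
    rw [Complex.sq_norm, Complex.normSq_apply]; ring
  have hpos : 0 ≤ ‖μ‖ := norm_nonneg μ
  rcases mul_eq_zero.mp him with hy0 | hxt
  · -- real root
    have hx0 : 0 ≤ x := by nlinarith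
    have hx1 : x < 1 := by nlinarith [sq_nonneg (x - 1)]
    nlinarith
  · -- complex pair: 2x = t, |μ|² = d
    have : x ^ 2 + y ^ 2 = d := by nlinarith
    nlinarith

/-- Schur stability of the comparison matrix of an LSTM layer: for `a, z ∈ (0,1)` and
`α, q ≥ 0`, if `a + z·α + q − a·q < 1` and `a·q < 1`, then all complex eigenvalues of
the matrix `[[a, α], [z·a, z·α + q]]` have modulus strictly less than 1. -/
theorem stmt_12 (a z α q : ℝ)
    (ha0 : 0 < a) (ha1 : a < 1) (hz0 : 0 < z) (hz1 : z < 1)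
    (hα : 0 ≤ α) (hq : 0 ≤ q)
    (h1 : a + z * α + q - a * q < 1) (h2 : a * q < 1) :
    ∀ μ : ℂ,
      (Matrix.charpoly ((!![a, α; z * a, z * α + q]).map (Complex.ofReal))).IsRoot μ →
        ‖μ‖ < 1 := by
  intro μ hroot
  have hcp : ((!![a, α; z * a, z * α + q]).map (Complex.ofReal)).charpoly
      = Polynomial.X ^ 2 - Polynomial.C ((a + z * α + q : ℝ) : ℂ) * Polynomial.X
        + Polynomial.C ((a * q : ℝ) : ℂ) := by
    rw [Matrix.charpoly, Matrix.det_fin_two]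
    simp [Matrix.charmatrix_apply, Matrix.map_apply, Matrix.diagonal]
    push_cast
    ring
  rw [hcp] at hroot
  have heq : μ ^ 2 - ((a + z * α + q : ℝ) : ℂ) * μ + ((a * q : ℝ) : ℂ) = 0 := by
    simpa [Polynomial.IsRoot] using hroot
  exact quad_root_abs_lt_one (a + z * α + q) (a * q)
    (by positivity) (by positivity) h2 (by nlinarith) μ heq
end
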